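/- Let γ : I → ℝ^n be a continuous generalized orbit of a convex foliation {C_r}_{r≥0}, and suppose γ is differentiable at some τ ∈ I with τ > 0 and γ′(τ) ≠ 0. Then −γ′(τ) lies in the interior of the normal cone N_{Ω(τ)}(γ(τ)), where Ω(τ) is the convex hull of {γ(t) : t ∈ I, t ≥ τ}. -/

import Mathlib

open Set Metric Filter Topology RealInnerProductSpace

/-- The normal cone of a convex set `K` at a point `u₀`. -/
def normalCone {n : ℕ} (K : Set (EuclideanSpace ℝ (Fin n))) (u₀ : EuclideanSpace ℝ (Fin n)) :
    Set (EuclideanSpace ℝ (Fin n)) :=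
  {v | ∀ u ∈ K, ⟪v, u - u₀⟫ ≤ 0}

/-- The set `sec⁻(τ)` of limits of backward unit secant vectors of the curve `γ` at `τ`. -/
def secMinus {n : ℕ} (I : Set ℝ) (γ : ℝ → EuclideanSpace ℝ (Fin n)) (τ : ℝ) :
    Set (EuclideanSpace ℝ (Fin n)) :=
  {q | ‖q‖ = 1 ∧ ∃ t : ℕ → ℝ, (∀ k, t k ∈ I) ∧ (∀ k, t k < τ) ∧
    Tendsto t atTop (nhds τ) ∧
    Tendsto (fun k => ‖γ (t k) - γ τ‖⁻¹ • (γ (t k) - γ τ)) atTop (nhds q)}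

/-- A family `{C r}_{r ≥ 0}` of nonempty compact convex sets is a *convex foliation* of
`ℝⁿ` if it is strictly nested (`r₁ < r₂ → C r₁ ⊆ int C r₂`) and the boundaries
`∂(C r)`, `r ≥ 0`, cover `ℝⁿ \ int (C 0)`. -/
def IsConvexFoliation {n : ℕ} (C : ℝ → Set (EuclideanSpace ℝ (Fin n))) : Prop :=
  (∀ r, 0 ≤ r → (C r).Nonempty ∧ IsCompact (C r) ∧ Convex ℝ (C r)) ∧
  (∀ r₁ r₂, 0 ≤ r₁ → r₁ < r₂ → C r₁ ⊆ interior (C r₂)) ∧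
  (⋃ r ∈ Ici (0 : ℝ), frontier (C r)) = univ \ interior (C 0)

/-- A continuous curve `γ : I → ℝⁿ` is a *generalized orbit* of the convex foliation
`{C r}` if its image avoids `int (C 0)`, the level function `r(·)` (determined by
`γ(t) ∈ ∂ C (r t)`) is strictly decreasing, and `sec⁻(t) ⊆ N_{C (r t)}(γ t)` for all
`t ∈ I`. -/
def IsGeneralizedOrbit {n : ℕ} (C : ℝ → Set (EuclideanSpace ℝ (Fin n)))
    (I : Set ℝ) (γ : ℝ → EuclideanSpace ℝ (Fin n)) (r : ℝ → ℝ) : Prop :=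
  ContinuousOn γ I ∧
  (∀ t ∈ I, γ t ∉ interior (C 0)) ∧
  (∀ t ∈ I, 0 ≤ r t ∧ γ t ∈ frontier (C (r t))) ∧
  (∀ t₁ ∈ I, ∀ t₂ ∈ I, t₁ < t₂ → r t₂ < r t₁) ∧
  (∀ t ∈ I, secMinus I γ t ⊆ normalCone (C (r t)) (γ t))

/-- If a generalized orbit `γ` of a convex foliation is differentiable at `τ > 0` with
nonzero derivative `v`, then `-v` belongs to the interior of the normal cone at `γ τ` of
the convex hull of the tail `{γ t : t ∈ I, t ≥ τ}`. -/
theorem generalizedOrbit_deriv_mem_interior_normalCone {n : ℕ}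
    (C : ℝ → Set (EuclideanSpace ℝ (Fin n))) (hC : IsConvexFoliation C)
    (T : ENNReal) (hT : 0 < T) (I : Set ℝ)
    (hI : I = {t : ℝ | 0 ≤ t ∧ ENNReal.ofReal t < T})
    (γ : ℝ → EuclideanSpace ℝ (Fin n)) (r : ℝ → ℝ)
    (hγ : IsGeneralizedOrbit C I γ r)
    (τ : ℝ) (hτ : τ ∈ I) (hτ0 : 0 < τ)
    (v : EuclideanSpace ℝ (Fin n)) (hv : HasDerivWithinAt γ v I τ) (hv0 : v ≠ 0) :
    -v ∈ interior (normalCone (convexHull ℝ (γ '' (I ∩ Ici τ))) (γ τ)) := by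
  obtain ⟨hcont, havoid, hfr, hdec, hsec⟩ := hγ
  have hvnorm : (0:ℝ) < ‖v‖ := norm_pos_iff.2 hv0
  have hIdc : ∀ ⦃t⦄, t ∈ I → ∀ ⦃s⦄, 0 ≤ s → s ≤ t → s ∈ I := by
    intro t ht s hs0 hst
    rw [hI] at ht ⊢
    exact ⟨hs0, lt_of_le_of_lt (ENNReal.ofReal_le_ofReal hst) ht.2⟩
  -- the backward unit secant direction is -v/‖v‖
  have hqsec : (-‖v‖⁻¹) • v ∈ secMinus I γ τ := by
    set t : ℕ → ℝ := fun k => τ - τ / (k + 2) with ht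
    have htlt : ∀ k, t k < τ := by
      intro k
      have : (0:ℝ) < τ / (k + 2) := by positivity
      simp only [ht]; linarith
    have htmem : ∀ k, t k ∈ I := by
      intro k
      refine hIdc hτ ?_ (htlt k).le
      have h1 : τ / ((k:ℝ) + 2) ≤ τ / 1 := by
        apply div_le_div_of_nonneg_left hτ0.le one_pos
        have : (0:ℝ) ≤ (k:ℝ) := Nat.cast_nonneg k
        linarith
      simp only [ht]; simp at h1 ⊢; linarith
    have httend : Tendsto t atTop (𝓝 τ) := by
      have h1 : Tendsto (fun k : ℕ => τ / ((k:ℝ) + 2)) atTop (𝓝 0) := by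
        apply Tendsto.div_atTop tendsto_const_nhds
        exact tendsto_atTop_add_const_right _ _ tendsto_natCast_atTop_atTop
      have := tendsto_const_nhds.sub h1 (α := ℕ) (f := fun _ : ℕ => τ)
      simpa using this
    have hslope := hasDerivWithinAt_iff_tendsto_slope.1 hv
    have htt : Tendsto t atTop (𝓝[I \ {τ}] τ) := by
      rw [tendsto_nhdsWithin_iff]
      exact ⟨httend, Eventually.of_forall fun k => ⟨htmem k, by simp [(htlt k).ne]⟩⟩
    have hw : Tendsto (fun k => slope γ τ (t k)) atTop (𝓝 v) := hslope.comp htt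
    refine ⟨?_, t, htmem, htlt, httend, ?_⟩
    · rw [norm_smul, Real.norm_eq_abs, abs_neg, abs_of_nonneg (by positivity)]
      exact inv_mul_cancel₀ hvnorm.ne'
    · have key : ∀ k, ‖γ (t k) - γ τ‖⁻¹ • (γ (t k) - γ τ)
          = (-‖slope γ τ (t k)‖⁻¹) • slope γ τ (t k) := by
        intro k
        have hd : t k - τ < 0 := sub_neg.2 (htlt k)
        have hne : t k - τ ≠ 0 := hd.ne
        have h1 : γ (t k) - γ τ = (t k - τ) • slope γ τ (t k) := by
          rw [slope_def_module, smul_inv_smul₀ hne]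
        rw [h1, norm_smul, Real.norm_eq_abs, abs_of_neg hd, mul_inv, smul_smul]
        congr 1
        rw [inv_neg, neg_mul, neg_mul, neg_inj, mul_right_comm,
          inv_mul_cancel₀ hne, one_mul]
      rw [show ((-‖v‖⁻¹) • v : EuclideanSpace ℝ (Fin n))
          = (-‖v‖⁻¹) • v from rfl]
      refine Tendsto.congr (fun k => (key k).symm) ?_
      exact ((hw.norm.inv₀ hvnorm.ne').neg).smul hw
  have hN : ∀ u ∈ C (r τ), ⟪(-‖v‖⁻¹) • v, u - γ τ⟫ ≤ 0 := hsec τ hτ hqsec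
  -- strict positivity of ⟪v, u - γ τ⟫ on the interior
  have hvN : ∀ u ∈ C (r τ), 0 ≤ ⟪v, u - γ τ⟫ := by
    intro u hu
    have h1 := hN u hu
    rw [real_inner_smul_left] at h1
    nlinarith [inv_pos.2 hvnorm]
  have hstrict : ∀ u ∈ interior (C (r τ)), 0 < ⟪v, u - γ τ⟫ := by
    intro u hu
    obtain ⟨δ₀, hδ₀, hball⟩ := Metric.isOpen_iff.1 isOpen_interior u hu
    set u' : EuclideanSpace ℝ (Fin n) := u - (δ₀ / (2 * ‖v‖)) • v with hu'def
    have hmem : u' ∈ C (r τ) := by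
      apply interior_subset (hball ?_)
      rw [mem_ball, dist_eq_norm, hu'def, sub_sub_cancel_left, norm_neg, norm_smul,
        Real.norm_eq_abs, abs_of_nonneg (by positivity)]
      have hhalf : δ₀ / (2 * ‖v‖) * ‖v‖ = δ₀ / 2 := by field_simp
      rw [hhalf]; linarith
    have h2 := hvN u' hmem
    have h3 : ⟪v, u' - γ τ⟫ = ⟪v, u - γ τ⟫ - (δ₀ / (2 * ‖v‖)) * ‖v‖^2 := by
      rw [hu'def, sub_right_comm, inner_sub_right, real_inner_smul_right,
        real_inner_self_eq_norm_sq]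
    have h4 : 0 < (δ₀ / (2 * ‖v‖)) * ‖v‖^2 := by positivity
    linarith
  -- little-o estimate near τ
  have hO := (hasDerivWithinAt_iff_isLittleO.1 hv).def (half_pos hvnorm)
  rw [eventually_nhdsWithin_iff, Metric.eventually_nhds_iff] at hO
  obtain ⟨δ, hδpos, hO⟩ := hO
  have hnear : ∀ t ∈ I, τ ≤ t → t - τ < δ → ‖v‖/3 * ‖γ t - γ τ‖ ≤ ⟪v, γ t - γ τ⟫ := by
    intro t htI hτt htδ
    have he := hO (y := t) (by
      rw [Real.dist_eq, abs_of_nonneg (sub_nonneg.2 hτt)]; exact htδ) htI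
    set e : EuclideanSpace ℝ (Fin n) := γ t - γ τ - (t - τ) • v with hedef
    have h1 : γ t - γ τ = (t - τ) • v + e := by rw [hedef]; abel
    have hip : ⟪v, γ t - γ τ⟫ = (t - τ) * ‖v‖^2 + ⟪v, e⟫ := by
      rw [h1, inner_add_right, real_inner_smul_right, real_inner_self_eq_norm_sq]
    have h2 : |⟪v, e⟫| ≤ ‖v‖ * ‖e‖ := abs_real_inner_le_norm v e
    have h3 : ‖γ t - γ τ‖ ≤ (t - τ) * ‖v‖ + ‖e‖ := by
      rw [h1]
      calc ‖(t - τ) • v + e‖ ≤ ‖(t - τ) • v‖ + ‖e‖ := norm_add_le _ _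
        _ = (t - τ) * ‖v‖ + ‖e‖ := by
            rw [norm_smul, Real.norm_eq_abs, abs_of_nonneg (sub_nonneg.2 hτt)]
    have he' : ‖e‖ ≤ ‖v‖/2 * (t - τ) := by
      have := he
      rw [Real.norm_eq_abs, abs_of_nonneg (sub_nonneg.2 hτt)] at this
      exact this
    have habs := abs_le.1 h2
    rw [hip]
    nlinarith [norm_nonneg e, sub_nonneg.2 hτt, habs.1, habs.2]
  -- uniform estimate on the tail
  have hkey : ∃ ε > 0, ∀ t ∈ I, τ ≤ t → ε * ‖γ t - γ τ‖ ≤ ⟪v, γ t - γ τ⟫ := by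
    by_cases hfar : ∃ t, t ∈ I ∧ τ + δ/2 ≤ t
    · obtain ⟨t₀, ht₀I, ht₀⟩ := hfar
      set s := τ + δ/4 with hs
      have hsI : s ∈ I := by
        refine hIdc ht₀I (by simp only [hs]; linarith) (by simp only [hs]; linarith)
      have hτs : τ < s := by simp only [hs]; linarith
      have hrs : r s < r τ := hdec τ hτ s hsI hτs
      have hrs0 : 0 ≤ r s := (hfr s hsI).1
      have hKsub : C (r s) ⊆ interior (C (r τ)) := hC.2.1 _ _ hrs0 hrs
      have hKcpt : IsCompact (C (r s)) := (hC.1 _ hrs0).2.1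
      have hKne : (C (r s)).Nonempty := (hC.1 _ hrs0).1
      obtain ⟨u₀, hu₀K, hu₀min⟩ := hKcpt.exists_isMinOn hKne
        (f := fun u => ⟪v, u - γ τ⟫)
        ((continuous_const.inner (continuous_id.sub continuous_const)).continuousOn)
      obtain ⟨u₁, hu₁K, hu₁max⟩ := hKcpt.exists_isMaxOn hKne
        (f := fun u => ‖u - γ τ‖)
        ((continuous_id.sub continuous_const).norm.continuousOn)
      set m := ⟪v, u₀ - γ τ⟫ with hm'
      set M := ‖u₁ - γ τ‖ with hM'
      have hm : 0 < m := hstrict u₀ (hKsub hu₀K)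
      have hne0 : u₀ - γ τ ≠ 0 := by
        intro h
        rw [hm', h, inner_zero_right] at hm
        exact lt_irrefl 0 hm
      have hM : 0 < M := lt_of_lt_of_le (norm_pos_iff.2 hne0) (isMaxOn_iff.1 hu₁max u₀ hu₀K)
      refine ⟨min (‖v‖/3) (m/M), lt_min (by positivity) (by positivity), ?_⟩
      intro t htI hτt
      by_cases hcase : t - τ < δ/2
      · calc min (‖v‖/3) (m/M) * ‖γ t - γ τ‖ ≤ ‖v‖/3 * ‖γ t - γ τ‖ :=
            mul_le_mul_of_nonneg_right (min_le_left _ _) (norm_nonneg _)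
          _ ≤ ⟪v, γ t - γ τ⟫ := hnear t htI hτt (by linarith)
      · push_neg at hcase
        have hst : s < t := by simp only [hs]; linarith
        have hrts : r t < r s := hdec s hsI t htI hst
        have hrt0 : 0 ≤ r t := (hfr t htI).1
        have hγtC : γ t ∈ C (r t) :=
          ((hC.1 _ hrt0).2.1.isClosed).frontier_subset (hfr t htI).2
        have hγtK : γ t ∈ C (r s) := interior_subset ((hC.2.1 _ _ hrt0 hrts) hγtC)
        have h1 : m ≤ ⟪v, γ t - γ τ⟫ := isMinOn_iff.1 hu₀min (γ t) hγtK
        have h2 : ‖γ t - γ τ‖ ≤ M := isMaxOn_iff.1 hu₁max (γ t) hγtK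
        calc min (‖v‖/3) (m/M) * ‖γ t - γ τ‖ ≤ (m/M) * M := by
              apply mul_le_mul (min_le_right _ _) h2 (norm_nonneg _)
              positivity
          _ = m := div_mul_cancel₀ m hM.ne'
          _ ≤ ⟪v, γ t - γ τ⟫ := h1
    · push_neg at hfar
      refine ⟨‖v‖/3, by positivity, ?_⟩
      intro t htI hτt
      exact hnear t htI hτt (by linarith [hfar t htI])
  obtain ⟨ε, hε, hkey⟩ := hkey
  have hball : ball (-v) ε ⊆ normalCone (convexHull ℝ (γ '' (I ∩ Ici τ))) (γ τ) := by
    intro w hw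
    rw [mem_ball, dist_eq_norm, sub_neg_eq_add] at hw
    intro u hu
    have hsub : γ '' (I ∩ Ici τ) ⊆ {u | ⟪w, u⟫ ≤ ⟪w, γ τ⟫} := by
      rintro _ ⟨t, ⟨htI, hτt⟩, rfl⟩
      have h1 := hkey t htI hτt
      have h2 : ⟪w + v, γ t - γ τ⟫ ≤ ‖w + v‖ * ‖γ t - γ τ‖ := real_inner_le_norm _ _
      have h3 : ⟪w, γ t - γ τ⟫ = ⟪w + v, γ t - γ τ⟫ - ⟪v, γ t - γ τ⟫ := by
        rw [inner_add_left]; ring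
      have h4 : ‖w + v‖ * ‖γ t - γ τ‖ ≤ ε * ‖γ t - γ τ‖ :=
        mul_le_mul_of_nonneg_right hw.le (norm_nonneg _)
      have h5 : ⟪w, γ t - γ τ⟫ ≤ 0 := by linarith
      rw [inner_sub_right] at h5
      simpa using sub_nonpos.1 h5
    have hhs : Convex ℝ {u : EuclideanSpace ℝ (Fin n) | ⟪w, u⟫ ≤ ⟪w, γ τ⟫} := by
      apply convex_halfSpace_le
      exact ⟨fun x y => inner_add_right _ _ _, fun c x => real_inner_smul_right _ _ _⟩
    have := convexHull_min hsub hhs hu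
    rw [inner_sub_right]
    exact sub_nonpos.2 this
  exact mem_interior.2 ⟨ball (-v) ε, hball, isOpen_ball, mem_ball_self hε⟩
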